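/- Let N be a connected, locally path-connected and semilocally simply connected topological space, let q : N' → N be a covering map of finite degree, let A ⊆ N be a subspace, and let c : A × [0,1] → N be a homeomorphism satisfying c(a,0) = a for all a ∈ A. Set A' = q⁻¹(A) ⊆ N'. Then there exists a homeomorphism c' : A' × [0,1] → N' such that q(c'(a',t)) = c(q(a'),t) for all a' ∈ A' and t ∈ [0,1]; that is, the collar c of A in N lifts to a collar of A' in N' compatible with the covering projections. -/

import Mathlib

open unitInterval

/-- A topological space `N` is semilocally simply connected if every point has a neighborhood
`U` such that every loop contained in `U` is null-homotopic in `N`. -/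
def SemilocallySimplyConnected (N : Type*) [TopologicalSpace N] : Prop :=
  ∀ x : N, ∃ U ∈ nhds x, ∀ γ : Path x x, (∀ t : unitInterval, γ t ∈ U) →
    γ.Homotopic (Path.refl x)

open Set Topology

section HLPsection

variable {X E B : Type*} [TopologicalSpace X] [TopologicalSpace E] [TopologicalSpace B]
  {q : E → B}

/-- Extension step: a partial lift on `W₀ ×ˢ {t ≤ a}` extends across an evenly covered set. -/
lemma lift_extend (hq : IsCoveringMap q) {H : X × unitInterval → B} (hH : Continuous H)
    {h0 : X → E} {x : X} {z : B} (T : Bundle.Trivialization (q ⁻¹' {z}) q)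
    {a b : ℝ} (ha0 : 0 ≤ a) (ha1 : a ≤ 1) (hab : a ≤ b)
    (hPa : ∃ W : Set X, IsOpen W ∧ x ∈ W ∧ ∃ L : X × unitInterval → E,
      ContinuousOn L (W ×ˢ {t : unitInterval | (t : ℝ) ≤ a}) ∧
      (∀ p ∈ W ×ˢ {t : unitInterval | (t : ℝ) ≤ a}, q (L p) = H p) ∧
      ∀ y ∈ W, L (y, 0) = h0 y)
    {V : Set X} (hVo : IsOpen V) (hxV : x ∈ V)
    (hV : ∀ y ∈ V, ∀ t : unitInterval, a ≤ (t : ℝ) → (t : ℝ) ≤ b → H (y, t) ∈ T.baseSet) :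
    ∃ W : Set X, IsOpen W ∧ x ∈ W ∧ ∃ L : X × unitInterval → E,
      ContinuousOn L (W ×ˢ {t : unitInterval | (t : ℝ) ≤ b}) ∧
      (∀ p ∈ W ×ˢ {t : unitInterval | (t : ℝ) ≤ b}, q (L p) = H p) ∧
      ∀ y ∈ W, L (y, 0) = h0 y := by
  obtain ⟨W₀, hW₀o, hxW₀, L₀, hL₀c, hL₀p, hL₀i⟩ := hPa
  set aI : unitInterval := ⟨a, ha0, ha1⟩ with haI
  refine ⟨W₀ ∩ V, hW₀o.inter hVo, ⟨hxW₀, hxV⟩, ?_⟩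
  have haIle : aI ∈ {t : unitInterval | (t : ℝ) ≤ a} := le_refl a
  have hsrc : ∀ y ∈ W₀ ∩ V, L₀ (y, aI) ∈ T.source := by
    intro y hy
    rw [T.mem_source, hL₀p (y, aI) ⟨hy.1, haIle⟩]
    exact hV y hy.2 aI (le_refl a) hab
  -- the fiber-coordinate function
  set f : X → q ⁻¹' {z} := fun y => (T (L₀ (y, aI))).2 with hf
  set L : X × unitInterval → E := fun p =>
    if (p.2 : ℝ) ≤ a then L₀ p else T.toOpenPartialHomeomorph.symm (H p, f p.1) with hL
  have hfy : ∀ y ∈ W₀ ∩ V, T.toOpenPartialHomeomorph.symm (H (y, aI), f y) = L₀ (y, aI) := by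
    intro y hy
    have h1 : (T (L₀ (y, aI))).1 = q (L₀ (y, aI)) := T.coe_fst (hsrc y hy)
    have h2 : q (L₀ (y, aI)) = H (y, aI) := hL₀p (y, aI) ⟨hy.1, haIle⟩
    have : (H (y, aI), f y) = T (L₀ (y, aI)) := by
      rw [hf]; exact Prod.ext (by rw [h1, h2]) rfl
    rw [this]
    exact T.toOpenPartialHomeomorph.left_inv (hsrc y hy)
  have hclosed : IsClosed {p : X × unitInterval | ((p.2 : ℝ)) ≤ a} :=
    isClosed_le (continuous_subtype_val.comp continuous_snd) continuous_const
  have hclosed' : IsClosed {p : X × unitInterval | a ≤ ((p.2 : ℝ))} :=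
    isClosed_le continuous_const (continuous_subtype_val.comp continuous_snd)
  have hfront : ∀ p : X × unitInterval,
      p ∈ frontier {p : X × unitInterval | ((p.2 : ℝ)) ≤ a} → p.2 = aI := by
    intro p hp
    have h1 : (p.2 : ℝ) ≤ a := by
      have := hp.1; rwa [hclosed.closure_eq] at this
    have h2 : a ≤ (p.2 : ℝ) := by
      have := hp.2
      have hsub : closure {p : X × unitInterval | ((p.2 : ℝ)) ≤ a}ᶜ ⊆
          {p : X × unitInterval | a ≤ ((p.2 : ℝ))} := by
        apply closure_minimal _ hclosed'
        intro p hp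
        exact le_of_not_ge (by simpa using hp)
      exact hsub (by rwa [closure_compl])
    exact Subtype.ext (le_antisymm h1 h2)
  have hmemT : ∀ p : X × unitInterval, p.1 ∈ W₀ ∩ V → a ≤ (p.2 : ℝ) → (p.2 : ℝ) ≤ b →
      (H p, f p.1) ∈ T.target := by
    intro p hp h1 h2
    rw [T.mem_target]
    exact hV p.1 hp.2 p.2 h1 h2
  -- continuity of f on W₀ ∩ V
  have hfc : ContinuousOn f (W₀ ∩ V) := by
    have h1 : ContinuousOn (fun y => L₀ (y, aI)) (W₀ ∩ V) := by
      apply hL₀c.comp (Continuous.continuousOn (by fun_prop))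
      intro y hy
      exact ⟨hy.1, haIle⟩
    have h2 : ContinuousOn (fun y => T (L₀ (y, aI))) (W₀ ∩ V) :=
      T.continuousOn_toFun.comp h1 hsrc
    exact continuous_snd.comp_continuousOn h2
  refine ⟨L, ?_, ?_, ?_⟩
  · -- continuity
    rw [hL]
    apply ContinuousOn.if
    · rintro p ⟨⟨hpW, -⟩, hpf⟩
      have hp2 : p.2 = aI := hfront p hpf
      have : p = (p.1, aI) := by rw [← hp2]
      rw [this]
      exact (hfy p.1 hpW).symm
    · apply hL₀c.mono
      rintro p ⟨⟨hpW, -⟩, hpa⟩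
      rw [hclosed.closure_eq] at hpa
      exact ⟨hpW.1, hpa⟩
    · have hsub : (W₀ ∩ V) ×ˢ {t : unitInterval | (t : ℝ) ≤ b} ∩
          closure {p : X × unitInterval | ¬ ((p.2 : ℝ)) ≤ a} ⊆
          {p : X × unitInterval | p.1 ∈ W₀ ∩ V ∧ a ≤ (p.2 : ℝ) ∧ (p.2 : ℝ) ≤ b} := by
        rintro p ⟨⟨h1, h2⟩, h3⟩
        have : closure {p : X × unitInterval | ¬ ((p.2 : ℝ)) ≤ a} ⊆
            {p : X × unitInterval | a ≤ ((p.2 : ℝ))} :=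
          closure_minimal (fun p hp => le_of_not_ge hp) hclosed'
        exact ⟨h1, this h3, h2⟩
      apply ContinuousOn.mono _ hsub
      apply ContinuousOn.comp T.toOpenPartialHomeomorph.continuousOn_symm
      · apply ContinuousOn.prodMk
        · exact hH.continuousOn
        · exact hfc.comp continuous_fst.continuousOn (fun p hp => hp.1)
      · rintro p ⟨h1, h2, h3⟩
        exact hmemT p h1 h2 h3
  · -- projection
    rintro p ⟨hpW, hpb⟩
    by_cases hpa : (p.2 : ℝ) ≤ a
    · simp only [hL, if_pos hpa]
      exact hL₀p p ⟨hpW.1, hpa⟩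
    · simp only [hL, if_neg hpa]
      exact T.proj_symm_apply (hmemT p hpW (le_of_not_ge hpa) hpb)
  · -- initial condition
    intro y hy
    have h0a : ((0 : unitInterval) : ℝ) ≤ a := by simpa using ha0
    simp only [hL, if_pos h0a]
    exact hL₀i y hy.1


/-- Homotopy lifting property for covering maps. -/
theorem IsCoveringMap.exists_homotopy_lift (hq : IsCoveringMap q)
    {H : X × unitInterval → B} (hH : Continuous H)
    {h0 : X → E} (hh0 : Continuous h0) (h : ∀ x, q (h0 x) = H (x, 0)) :
    ∃ H' : X × unitInterval → E, Continuous H' ∧ (∀ p, q (H' p) = H p) ∧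
      ∀ x, H' (x, 0) = h0 x := by
  -- local lifts
  have hloc : ∀ x : X, ∃ W : Set X, IsOpen W ∧ x ∈ W ∧ ∃ L : X × unitInterval → E,
      ContinuousOn L (W ×ˢ (univ : Set unitInterval)) ∧
      (∀ p ∈ W ×ˢ (univ : Set unitInterval), q (L p) = H p) ∧
      ∀ y ∈ W, L (y, 0) = h0 y := by
    intro x
    set P : ℝ → Prop := fun r => ∃ W : Set X, IsOpen W ∧ x ∈ W ∧
      ∃ L : X × unitInterval → E,
        ContinuousOn L (W ×ˢ {t : unitInterval | (t : ℝ) ≤ r}) ∧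
        (∀ p ∈ W ×ˢ {t : unitInterval | (t : ℝ) ≤ r}, q (L p) = H p) ∧
        ∀ y ∈ W, L (y, 0) = h0 y with hP
    have hP0 : P 0 := by
      refine ⟨univ, isOpen_univ, mem_univ x, fun p => h0 p.1, ?_, ?_, fun y _ => rfl⟩
      · exact hh0.comp_continuousOn continuous_fst.continuousOn
      · rintro ⟨y, t⟩ ⟨-, ht⟩
        have : t = 0 := Subtype.ext (le_antisymm ht t.2.1)
        rw [this]; exact h y
    set S : Set ℝ := {r | r ∈ Icc (0:ℝ) 1 ∧ P r} with hS
    have h0S : (0:ℝ) ∈ S := ⟨⟨le_refl 0, zero_le_one⟩, hP0⟩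
    have hbdd : BddAbove S := ⟨1, fun r hr => hr.1.2⟩
    set r₀ : ℝ := sSup S with hr₀
    have h0r : 0 ≤ r₀ := le_csSup hbdd h0S
    have hr1 : r₀ ≤ 1 := csSup_le ⟨0, h0S⟩ fun r hr => hr.1.2
    set tI : unitInterval := ⟨r₀, h0r, hr1⟩ with htI
    have hne : Nonempty (q ⁻¹' {H (x, tI)}) :=
      ⟨⟨hq.liftPath ⟨fun t => H (x, t), hH.comp (Continuous.prodMk continuous_const continuous_id)⟩
        (h0 x) (h x).symm tI, congrFun (hq.liftPath_lifts _ _ _) tI⟩⟩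
    obtain ⟨T, hTbase⟩ : ∃ T : Bundle.Trivialization (q ⁻¹' {H (x, tI)}) q, H (x, tI) ∈ T.baseSet :=
      ⟨_, (hq _).mem_toTrivialization_baseSet⟩
    have hnhds : H ⁻¹' T.baseSet ∈ nhds (x, tI) :=
      (T.open_baseSet.preimage hH).mem_nhds hTbase
    rw [mem_nhds_prod_iff] at hnhds
    obtain ⟨u, hu, v, hv, huv⟩ := hnhds
    obtain ⟨ε, hε, hball⟩ := Metric.mem_nhds_iff.mp hv
    obtain ⟨t₀, ht₀S, ht₀⟩ : ∃ t₀ ∈ S, r₀ - ε/2 < t₀ :=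
      exists_lt_of_lt_csSup ⟨0, h0S⟩ (by linarith)
    have ht₀r : t₀ ≤ r₀ := le_csSup hbdd ht₀S
    set b : ℝ := min 1 (r₀ + ε/2) with hb
    obtain ⟨V, hVu, hVo, hxV⟩ := mem_nhds_iff.mp hu
    have hPb : P b := by
      apply lift_extend hq hH T ht₀S.1.1 ht₀S.1.2
        (le_min ht₀S.1.2 (by linarith)) ht₀S.2 hVo hxV
      intro y hy t h1 h2
      apply huv
      refine ⟨hVu hy, hball ?_⟩
      rw [Metric.mem_ball, Subtype.dist_eq, htI]
      have h3 : (t:ℝ) ≤ r₀ + ε/2 := le_trans h2 (min_le_right _ _)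
      rw [Real.dist_eq, abs_sub_lt_iff]
      constructor <;> linarith
    have hbS : b ∈ S := by
      refine ⟨⟨le_min zero_le_one (by linarith), min_le_left _ _⟩, hPb⟩
    have hbr : b ≤ r₀ := le_csSup hbdd hbS
    have hr₀1 : r₀ = 1 := by
      by_contra hne
      have : r₀ < 1 := lt_of_le_of_ne hr1 hne
      have : r₀ < b := lt_min this (by linarith)
      linarith
    have hb1 : b = 1 := by rw [hb, hr₀1]; exact min_eq_left (by linarith)
    rw [hb1] at hPb
    obtain ⟨W, hWo, hxW, L, hLc, hLp, hLi⟩ := hPb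
    have huniv : {t : unitInterval | (t : ℝ) ≤ 1} = univ :=
      eq_univ_of_forall fun t => t.2.2
    rw [huniv] at hLc hLp
    exact ⟨W, hWo, hxW, L, hLc, hLp, hLi⟩
  choose W hWo hWmem L hLc hLp hLi using hloc
  refine ⟨fun p => L p.1 p, ?_, fun p => hLp p.1 p ⟨hWmem p.1, mem_univ _⟩,
    fun x => hLi x x (hWmem x)⟩
  rw [continuous_iff_continuousAt]
  rintro ⟨x, t⟩
  have hkey : ∀ p : X × unitInterval, p ∈ W x ×ˢ (univ : Set unitInterval) →
      L p.1 p = L x p := by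
    rintro ⟨y, s⟩ ⟨hyW, -⟩
    have h1 : Continuous fun u : unitInterval => L y (y, u) := by
      apply (hLc y).comp_continuous (by fun_prop)
      exact fun u => ⟨hWmem y, mem_univ _⟩
    have h2 : Continuous fun u : unitInterval => L x (y, u) := by
      apply (hLc x).comp_continuous (by fun_prop)
      exact fun u => ⟨hyW, mem_univ _⟩
    have heq : (fun u : unitInterval => L y (y, u)) = fun u => L x (y, u) := by
      apply hq.eq_of_comp_eq h1 h2 _ 0
      · rw [hLi y y (hWmem y), hLi x y hyW]
      · funext u
        simp only [Function.comp]
        rw [hLp y (y, u) ⟨hWmem y, mem_univ _⟩, hLp x (y, u) ⟨hyW, mem_univ _⟩]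
    exact congrFun heq s
  have hopen : IsOpen (W x ×ˢ (univ : Set unitInterval)) := (hWo x).prod isOpen_univ
  have hmem : (x, t) ∈ W x ×ˢ (univ : Set unitInterval) := ⟨hWmem x, mem_univ _⟩
  have hCA : ContinuousAt (L x) (x, t) :=
    (hLc x).continuousAt (hopen.mem_nhds hmem)
  apply hCA.congr
  apply Filter.eventuallyEq_of_mem (hopen.mem_nhds hmem)
  intro p hp
  exact (hkey p hp).symm

end HLPsection

def mulI (s t : unitInterval) : unitInterval := ⟨(s : ℝ) * t, unitInterval.mul_mem s.2 t.2⟩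

lemma mulI_one (s : unitInterval) : mulI s 1 = s := Subtype.ext (by simp [mulI])

lemma mulI_zero (s : unitInterval) : mulI s 0 = 0 := Subtype.ext (by simp [mulI])

lemma continuous_mulI : Continuous fun p : unitInterval × unitInterval => mulI p.1 p.2 := by
  apply Continuous.subtype_mk
  fun_prop


/-- Let `N` be a connected, locally path-connected and semilocally simply
connected topological space, let `q : N' → N` be a covering map of finite degree, let
`A ⊆ N` be a subspace, and let `c : A × [0,1] → N` be a homeomorphism with `c(a, 0) = a` for
all `a ∈ A`. Set `A' = q⁻¹(A) ⊆ N'`. Then there exists a homeomorphism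
`c' : A' × [0,1] → N'` with `q(c'(a', t)) = c(q(a'), t)` for all `a' ∈ A'`, `t ∈ [0,1]`;
that is, the collar `c` of `A` in `N` lifts to a collar of `A'` in `N'` compatible with the
covering projections. -/
theorem collar_lifts_along_finite_covering
    {N N' : Type*} [TopologicalSpace N] [TopologicalSpace N']
    [ConnectedSpace N] [LocallyPathConnectedSpace N]
    (hslsc : SemilocallySimplyConnected N)
    (q : N' → N) (hq : IsCoveringMap q) (hqsurj : Function.Surjective q)
    (hfin : ∀ x : N, (q ⁻¹' {x}).Finite)
    (A : Set N) (c : ↥A × unitInterval ≃ₜ N)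
    (hc : ∀ a : ↥A, c (a, 0) = (a : N)) :
    ∃ c' : ↥(q ⁻¹' A) × unitInterval ≃ₜ N',
      ∀ (a' : ↥(q ⁻¹' A)) (t : unitInterval),
        q (c' (a', t)) = c (⟨⟨q (a' : N'), a'.2⟩, t⟩) := by
  classical
  have hqc : Continuous q := hq.continuous
  -- the collar coordinates of a point of N
  set aN : N → ↥A := fun n => (c.symm n).1 with haN
  set sN : N → unitInterval := fun n => (c.symm n).2 with hsN
  have haNc : Continuous aN := continuous_fst.comp c.symm.continuous
  have hsNc : Continuous sN := continuous_snd.comp c.symm.continuous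
  have hcsymm : ∀ n : N, c (aN n, sN n) = n := by
    intro n
    have : (aN n, sN n) = c.symm n := rfl
    rw [this, c.apply_symm_apply]
  -- the homotopy to lift for the forward map
  set F : ↥(q ⁻¹' A) × unitInterval → N := fun p => c (⟨q ↑p.1, p.1.2⟩, p.2) with hF
  have hFc : Continuous F := by
    apply c.continuous.comp
    apply Continuous.prodMk
    · exact Continuous.subtype_mk (hqc.comp (continuous_subtype_val.comp continuous_fst)) _
    · exact continuous_snd
  have hF0 : ∀ a' : ↥(q ⁻¹' A), q ↑a' = F (a', 0) := fun a' => (hc ⟨q ↑a', a'.2⟩).symm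
  obtain ⟨F', hF'c, hF'p, hF'0⟩ :=
    hq.exists_homotopy_lift hFc continuous_subtype_val hF0
  -- the homotopy to lift for the backward map
  set G : N' × unitInterval → N :=
    fun p => c (aN (q p.1), mulI (sN (q p.1)) (unitInterval.symm p.2)) with hG
  have hGc : Continuous G := by
    apply c.continuous.comp
    apply Continuous.prodMk
    · exact haNc.comp (hqc.comp continuous_fst)
    · exact continuous_mulI.comp
        ((hsNc.comp (hqc.comp continuous_fst)).prodMk
          (continuous_symm.comp continuous_snd))
  have hG0 : ∀ n' : N', q (id n') = G (n', 0) := by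
    intro n'
    rw [hG]
    simp only [id_eq, unitInterval.symm_zero, mulI_one]
    exact (hcsymm (q n')).symm
  obtain ⟨G', hG'c, hG'p, hG'0⟩ := hq.exists_homotopy_lift hGc continuous_id hG0
  -- the retraction to the boundary
  set ret : N' → N' := fun n' => G' (n', 1) with hretdef
  have hret : ∀ n', q (ret n') = ↑(aN (q n')) := by
    intro n'
    rw [hretdef]
    simp only
    rw [hG'p (n', 1), hG]
    simp only [unitInterval.symm_one, mulI_zero]
    exact hc _
  have hretA : ∀ n', ret n' ∈ q ⁻¹' A := by
    intro n'
    rw [mem_preimage, hret n']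
    exact (aN (q n')).2
  -- uniqueness of path lifts
  have huniq : ∀ g₁ g₂ : unitInterval → N', Continuous g₁ → Continuous g₂ →
      (∀ u, q (g₁ u) = q (g₂ u)) → ∀ u₀, g₁ u₀ = g₂ u₀ → ∀ u, g₁ u = g₂ u := by
    intro g₁ g₂ h1 h2 he u₀ h0 u
    exact congrFun (hq.eq_of_comp_eq h1 h2 (funext he) u₀ h0) u
  -- the collar coordinates of q (F' (a', t))
  have hsymmF : ∀ (a' : ↥(q ⁻¹' A)) (t : unitInterval),
      c.symm (q (F' (a', t))) = (⟨q ↑a', a'.2⟩, t) := by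
    intro a' t
    rw [hF'p (a', t), hF]
    exact c.symm_apply_apply _
  have haNF : ∀ (a' : ↥(q ⁻¹' A)) (t : unitInterval),
      aN (q (F' (a', t))) = ⟨q ↑a', a'.2⟩ := by
    intro a' t
    rw [haN]; simp only; rw [hsymmF a' t]
  have hsNF : ∀ (a' : ↥(q ⁻¹' A)) (t : unitInterval),
      sN (q (F' (a', t))) = t := by
    intro a' t
    rw [hsN]; simp only; rw [hsymmF a' t]
  -- left inverse : retracting a collar point recovers the boundary point
  have hLI : ∀ (a' : ↥(q ⁻¹' A)) (t : unitInterval), ret (F' (a', t)) = ↑a' := by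
    intro a' t
    have key := huniq (fun u => G' (F' (a', t), u))
      (fun u => F' (a', mulI t (unitInterval.symm u)))
      (hG'c.comp (continuous_const.prodMk continuous_id))
      (hF'c.comp (continuous_const.prodMk
        (continuous_mulI.comp (continuous_const.prodMk continuous_symm))))
      (by
        intro u
        rw [hG'p (F' (a', t), u), hF'p (a', mulI t (unitInterval.symm u)), hG, hF]
        simp only
        rw [haNF a' t, hsNF a' t])
      0
      (by
        simp only [unitInterval.symm_zero, mulI_one]
        exact (hG'0 _).trans rfl)
      1
    simp only [unitInterval.symm_one, mulI_zero] at key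
    rw [hretdef]
    simp only
    rw [key, hF'0 a']
  -- right inverse
  have hRI : ∀ n' : N', F' (⟨ret n', hretA n'⟩, sN (q n')) = n' := by
    intro n'
    have key := huniq (fun u => G' (n', u))
      (fun u => F' (⟨ret n', hretA n'⟩, mulI (sN (q n')) (unitInterval.symm u)))
      (hG'c.comp (continuous_const.prodMk continuous_id))
      (hF'c.comp (continuous_const.prodMk
        (continuous_mulI.comp (continuous_const.prodMk continuous_symm))))
      (by
        intro u
        rw [hG'p (n', u), hF'p (⟨ret n', hretA n'⟩, mulI (sN (q n')) (unitInterval.symm u)),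
          hG, hF]
        simp only
        congr 1
        exact congrArg (fun a => (a, mulI (sN (q n')) (unitInterval.symm u)))
          (Subtype.ext (hret n')).symm)
      1
      (by
        simp only [unitInterval.symm_one, mulI_zero]
        rw [hF'0 ⟨ret n', hretA n'⟩])
      0
    simp only [unitInterval.symm_zero, mulI_one] at key
    rw [← key, hG'0 n']
    rfl
  -- assemble the homeomorphism
  refine ⟨Homeomorph.mk
    ⟨fun p => F' p, fun n' => (⟨ret n', hretA n'⟩, sN (q n')), ?_, ?_⟩ hF'c ?_, ?_⟩
  · rintro ⟨a', t⟩
    exact Prod.ext (Subtype.ext (hLI a' t)) (hsNF a' t)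
  · intro n'
    exact hRI n'
  · apply Continuous.prodMk
    · exact Continuous.subtype_mk
        (hG'c.comp (continuous_id.prodMk continuous_const)) _
    · exact hsNc.comp hqc
  · intro a' t
    exact hF'p (a', t)
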